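/- arXiv:1804.10447 — 2 statements merged into one kernel-verified Lean document; each statement's English description precedes it below -/
import Mathlib

section
/- The Or rule inequality: let A, B, C be events with P(A) > 0 and P(B) > 0. Then the conjunction (C|A) ∧ (C|B) is pointwise less than or equal to the conditional event C|(A∪B), i.e., for every ω ∈ Ω, ((C|A) ∧ (C|B))(ω) ≤ (C|(A∪B))(ω), where C|(A∪B) is the random variable equal to 1 on C∩(A∪B), to 0 on (A∪B)∖C, and to P(C|A∪B) on Aᶜ∩Bᶜ. -/
open MeasureTheory
open scoped Classical

/-- `P(E|H) := P(E∩H)/P(H)`. -/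
noncomputable def condProb {Ω : Type*} [MeasurableSpace Ω] (P : Measure Ω)
    (E H : Set Ω) : ℝ :=
  (P (E ∩ H)).toReal / (P H).toReal

/-- The conditional event `E|H`: the random variable equal to `1` on `E∩H`, to `0` on
`H∖E`, and to `P(E|H)` on `Hᶜ`. -/
noncomputable def condEvent {Ω : Type*} [MeasurableSpace Ω] (P : Measure Ω)
    (E H : Set Ω) : Ω → ℝ := fun ω =>
  if ω ∈ E ∩ H then 1 else if ω ∈ H \ E then 0 else condProb P E H

/-- The prevision `z := [P(A∩H∩B∩K) + x·P(Hᶜ∩B∩K) + y·P(A∩H∩Kᶜ)]/P(H∪K)` of the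
conjunction `(A|H) ∧ (B|K)`, where `x := P(A|H)` and `y := P(B|K)`. -/
noncomputable def conjPrev {Ω : Type*} [MeasurableSpace Ω] (P : Measure Ω)
    (A H B K : Set Ω) : ℝ :=
  ((P (A ∩ H ∩ (B ∩ K))).toReal + condProb P A H * (P (Hᶜ ∩ (B ∩ K))).toReal +
      condProb P B K * (P (A ∩ H ∩ Kᶜ)).toReal) / (P (H ∪ K)).toReal

/-- The conjunction `(A|H) ∧ (B|K)`: the random variable equal to `1` on `A∩H∩B∩K`, to `0`
on `(H∖A) ∪ (K∖B)`, to `x := P(A|H)` on `Hᶜ∩B∩K`, to `y := P(B|K)` on `A∩H∩Kᶜ`, and to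
`z := [P(A∩H∩B∩K) + x·P(Hᶜ∩B∩K) + y·P(A∩H∩Kᶜ)]/P(H∪K)` on `Hᶜ∩Kᶜ`. -/
noncomputable def conj2 {Ω : Type*} [MeasurableSpace Ω] (P : Measure Ω)
    (A H B K : Set Ω) : Ω → ℝ := fun ω =>
  if ω ∈ A ∩ H ∩ (B ∩ K) then 1
  else if ω ∈ (H \ A) ∪ (K \ B) then 0
  else if ω ∈ Hᶜ ∩ (B ∩ K) then condProb P A H
  else if ω ∈ A ∩ H ∩ Kᶜ then condProb P B K
  else conjPrev P A H B K

/-- The Or rule inequality: let `A, B, C` be events with `P(A) > 0` and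
`P(B) > 0`.  Then the conjunction `(C|A) ∧ (C|B)` is pointwise less than or equal to the
conditional event `C|(A∪B)`: for every `ω ∈ Ω`,
`((C|A) ∧ (C|B))(ω) ≤ (C|(A∪B))(ω)`. -/
theorem stmt18 {Ω : Type*} [MeasurableSpace Ω] (P : Measure Ω) [IsProbabilityMeasure P]
    (A B C : Set Ω) (hA : MeasurableSet A) (hB : MeasurableSet B) (hC : MeasurableSet C)
    (hApos : 0 < P A) (hBpos : 0 < P B) :
    ∀ ω : Ω, conj2 P C A C B ω ≤ condEvent P C (A ∪ B) ω := by
  intro ω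
  have hxle : condProb P C A ≤ 1 := by
    unfold condProb
    apply div_le_one_of_le₀
    · exact ENNReal.toReal_mono (measure_ne_top P A) (measure_mono Set.inter_subset_right)
    · exact ENNReal.toReal_nonneg
  have hyle : condProb P C B ≤ 1 := by
    unfold condProb
    apply div_le_one_of_le₀
    · exact ENNReal.toReal_mono (measure_ne_top P B) (measure_mono Set.inter_subset_right)
    · exact ENNReal.toReal_nonneg
  have hx0 : 0 ≤ condProb P C A := div_nonneg ENNReal.toReal_nonneg ENNReal.toReal_nonneg
  have hy0 : 0 ≤ condProb P C B := div_nonneg ENNReal.toReal_nonneg ENNReal.toReal_nonneg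
  have hABpos : 0 < (P (A ∪ B)).toReal := by
    apply ENNReal.toReal_pos
    · exact ne_of_gt (lt_of_lt_of_le hApos (measure_mono Set.subset_union_left))
    · exact measure_ne_top P _
  have hset : C ∩ (A ∪ B) = (C ∩ A ∩ (C ∩ B)) ∪ ((Aᶜ ∩ (C ∩ B)) ∪ (C ∩ A ∩ Bᶜ)) := by
    ext x
    simp only [Set.mem_inter_iff, Set.mem_union, Set.mem_compl_iff]
    tauto
  have hd1 : Disjoint (C ∩ A ∩ (C ∩ B)) ((Aᶜ ∩ (C ∩ B)) ∪ (C ∩ A ∩ Bᶜ)) := by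
    rw [Set.disjoint_left]
    intro x hx h2
    simp only [Set.mem_inter_iff, Set.mem_union, Set.mem_compl_iff] at hx h2
    tauto
  have hd2 : Disjoint (Aᶜ ∩ (C ∩ B)) (C ∩ A ∩ Bᶜ) := by
    rw [Set.disjoint_left]
    intro x hx h2
    simp only [Set.mem_inter_iff, Set.mem_compl_iff] at hx h2
    tauto
  have hm : P (C ∩ (A ∪ B)) =
      P (C ∩ A ∩ (C ∩ B)) + (P (Aᶜ ∩ (C ∩ B)) + P (C ∩ A ∩ Bᶜ)) := by
    rw [hset, measure_union hd1 (((hA.compl.inter (hC.inter hB))).union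
      ((hC.inter hA).inter hB.compl)),
      measure_union hd2 ((hC.inter hA).inter hB.compl)]
  have htr : (P (C ∩ (A ∪ B))).toReal =
      (P (C ∩ A ∩ (C ∩ B))).toReal + ((P (Aᶜ ∩ (C ∩ B))).toReal + (P (C ∩ A ∩ Bᶜ)).toReal) := by
    rw [hm, ENNReal.toReal_add (measure_ne_top P _)
      (ENNReal.add_ne_top.2 ⟨measure_ne_top P _, measure_ne_top P _⟩),
      ENNReal.toReal_add (measure_ne_top P _) (measure_ne_top P _)]
  have hkey : conjPrev P C A C B ≤ condProb P C (A ∪ B) := by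
    rw [show condProb P C (A ∪ B) = (P (C ∩ (A ∪ B))).toReal / (P (A ∪ B)).toReal from rfl]
    unfold conjPrev
    rw [div_le_div_iff_of_pos_right hABpos, htr]
    have hb : condProb P C A * (P (Aᶜ ∩ (C ∩ B))).toReal ≤ (P (Aᶜ ∩ (C ∩ B))).toReal := by
      nth_rewrite 2 [← one_mul ((P (Aᶜ ∩ (C ∩ B))).toReal)]
      exact mul_le_mul_of_nonneg_right hxle ENNReal.toReal_nonneg
    have hc : condProb P C B * (P (C ∩ A ∩ Bᶜ)).toReal ≤ (P (C ∩ A ∩ Bᶜ)).toReal := by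
      nth_rewrite 2 [← one_mul ((P (C ∩ A ∩ Bᶜ)).toReal)]
      exact mul_le_mul_of_nonneg_right hyle ENNReal.toReal_nonneg
    linarith
  by_cases h1 : ω ∈ C ∩ A ∩ (C ∩ B)
  · have hmem : ω ∈ C ∩ (A ∪ B) := ⟨h1.1.1, Or.inl h1.1.2⟩
    simp [conj2, condEvent, h1, hmem]
  by_cases h2 : ω ∈ (A \ C) ∪ (B \ C)
  · have hnC : ω ∉ C := by rcases h2 with h | h <;> exact h.2
    have hAB : ω ∈ A ∪ B := by
      rcases h2 with h | h
      · exact Or.inl h.1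
      · exact Or.inr h.1
    have hm1 : ω ∉ C ∩ (A ∪ B) := fun h => hnC h.1
    have hm2 : ω ∈ (A ∪ B) \ C := ⟨hAB, hnC⟩
    simp [conj2, condEvent, h1, h2, hm1, hm2]
  by_cases h3 : ω ∈ Aᶜ ∩ (C ∩ B)
  · have hmem : ω ∈ C ∩ (A ∪ B) := ⟨h3.2.1, Or.inr h3.2.2⟩
    simp only [conj2, condEvent, if_neg h1, if_neg h2, if_pos h3, if_pos hmem]
    exact hxle
  by_cases h4 : ω ∈ C ∩ A ∩ Bᶜ
  · have hmem : ω ∈ C ∩ (A ∪ B) := ⟨h4.1.1, Or.inl h4.1.2⟩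
    simp only [conj2, condEvent, if_neg h1, if_neg h2, if_neg h3, if_pos h4, if_pos hmem]
    exact hyle
  · have hnA : ω ∉ A := by
      intro hAmem
      have hCmem : ω ∈ C := by
        by_contra hc
        exact h2 (Or.inl ⟨hAmem, hc⟩)
      have hBmem : ω ∈ B := by
        by_contra hb
        exact h4 ⟨⟨hCmem, hAmem⟩, hb⟩
      exact h1 ⟨⟨hCmem, hAmem⟩, hCmem, hBmem⟩
    have hnB : ω ∉ B := by
      intro hBmem
      have hCmem : ω ∈ C := by
        by_contra hc
        exact h2 (Or.inr ⟨hBmem, hc⟩)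
      exact h3 ⟨hnA, hCmem, hBmem⟩
    have hm1 : ω ∉ C ∩ (A ∪ B) := by
      rintro ⟨-, h | h⟩
      · exact hnA h
      · exact hnB h
    have hm2 : ω ∉ (A ∪ B) \ C := by
      rintro ⟨h | h, -⟩
      · exact hnA h
      · exact hnB h
    simp only [conj2, condEvent, if_neg h1, if_neg h2, if_neg h3, if_neg h4,
      if_neg hm1, if_neg hm2]
    exact hkey
end

section
/- Every point satisfying the Fréchet–Hoeffding bounds is attained: for all real numbers x, y, z with 0 ≤ x ≤ 1, 0 ≤ y ≤ 1 and max{x + y − 1, 0} ≤ z ≤ min{x, y}, there exists a probability measure P on the finite sample space {0,1}⁴ (all subsets measurable), with coordinate events A := {ω : ω₁ = 1}, H := {ω : ω₂ = 1}, B := {ω : ω₃ = 1}, K := {ω : ω₄ = 1}, such that P(H) > 0, P(K) > 0, P(A|H) = x, P(B|K) = y, and [P(A∩H∩B∩K) + x·P(Hᶜ∩B∩K) + y·P(A∩H∩Kᶜ)]/P(H∪K) = z. -/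
open MeasureTheory
open scoped Classical

/-- Every point satisfying the Fréchet–Hoeffding bounds is attained:
for all reals `x, y, z` with `0 ≤ x ≤ 1`, `0 ≤ y ≤ 1` and
`max {x + y − 1, 0} ≤ z ≤ min {x, y}`, there is a probability measure `P` on `{0,1}⁴`
(all subsets measurable) with coordinate events `A, H, B, K` such that `P(H) > 0`,
`P(K) > 0`, `P(A|H) = x`, `P(B|K) = y`, and
`[P(A∩H∩B∩K) + x·P(Hᶜ∩B∩K) + y·P(A∩H∩Kᶜ)]/P(H∪K) = z`. -/
theorem stmt19 (x y z : ℝ) (hx : 0 ≤ x) (hx1 : x ≤ 1) (hy : 0 ≤ y) (hy1 : y ≤ 1)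
    (hz : max (x + y - 1) 0 ≤ z) (hz' : z ≤ min x y) :
    ∃ P : Measure (Fin 4 → Bool), IsProbabilityMeasure P ∧
      0 < P {ω | ω 1 = true} ∧ 0 < P {ω | ω 3 = true} ∧
      condProb P {ω | ω 0 = true} {ω | ω 1 = true} = x ∧
      condProb P {ω | ω 2 = true} {ω | ω 3 = true} = y ∧
      conjPrev P {ω | ω 0 = true} {ω | ω 1 = true} {ω | ω 2 = true} {ω | ω 3 = true}
        = z := by
  have hz0 : 0 ≤ z := le_trans (le_max_right _ _) hz
  have hzx : z ≤ x := hz'.trans (min_le_left _ _)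
  have hzy : z ≤ y := hz'.trans (min_le_right _ _)
  have hzxy : x + y - 1 ≤ z := le_trans (le_max_left _ _) hz
  set P : Measure (Fin 4 → Bool) :=
    ENNReal.ofReal z • Measure.dirac ![true, true, true, true] +
    ENNReal.ofReal (x - z) • Measure.dirac ![true, true, false, true] +
    ENNReal.ofReal (y - z) • Measure.dirac ![false, true, true, true] +
    ENNReal.ofReal (1 - x - y + z) • Measure.dirac ![false, true, false, true] with hP
  have key : ∀ S : Set (Fin 4 → Bool),
      P S = ENNReal.ofReal z * (if ![true, true, true, true] ∈ S then 1 else 0)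
        + ENNReal.ofReal (x - z) * (if ![true, true, false, true] ∈ S then 1 else 0)
        + ENNReal.ofReal (y - z) * (if ![false, true, true, true] ∈ S then 1 else 0)
        + ENNReal.ofReal (1 - x - y + z) * (if ![false, true, false, true] ∈ S then 1 else 0) := by
    intro S
    simp only [hP, Measure.coe_add, Measure.coe_smul, Pi.add_apply, Pi.smul_apply,
      smul_eq_mul, Measure.dirac_apply, Set.indicator_apply, Pi.one_apply]
  have hsum : ∀ a b : ℝ, 0 ≤ a → 0 ≤ b →
      ENNReal.ofReal a + ENNReal.ofReal b = ENNReal.ofReal (a + b) := fun a b ha hb =>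
    (ENNReal.ofReal_add ha hb).symm
  have hall : ∀ S : Set (Fin 4 → Bool),
      ![true, true, true, true] ∈ S → ![true, true, false, true] ∈ S →
      ![false, true, true, true] ∈ S → ![false, true, false, true] ∈ S → P S = 1 := by
    intro S m1 m2 m3 m4
    rw [key, if_pos m1, if_pos m2, if_pos m3, if_pos m4]
    simp only [mul_one]
    rw [hsum _ _ hz0 (by linarith), hsum _ _ (by linarith) (by linarith),
      hsum _ _ (by linarith) (by linarith)]
    rw [show z + (x - z) + (y - z) + (1 - x - y + z) = 1 by ring, ENNReal.ofReal_one]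
  have hH : P {ω | ω 1 = true} = 1 := hall _ (by decide) (by decide) (by decide) (by decide)
  have hK : P {ω | ω 3 = true} = 1 := hall _ (by decide) (by decide) (by decide) (by decide)
  have hHK : P ({ω | ω 1 = true} ∪ {ω | ω 3 = true}) = 1 :=
    hall _ (by decide) (by decide) (by decide) (by decide)
  have hUniv : P Set.univ = 1 := hall _ (by decide) (by decide) (by decide) (by decide)
  have hAH : P ({ω | ω 0 = true} ∩ {ω | ω 1 = true}) = ENNReal.ofReal x := by
    rw [key, if_pos (by decide), if_pos (by decide), if_neg (by decide), if_neg (by decide)]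
    simp only [mul_one, mul_zero, add_zero]
    rw [hsum _ _ hz0 (by linarith)]
    ring_nf
  have hBK : P ({ω | ω 2 = true} ∩ {ω | ω 3 = true}) = ENNReal.ofReal y := by
    rw [key, if_pos (by decide), if_neg (by decide), if_pos (by decide), if_neg (by decide)]
    simp only [mul_one, mul_zero, add_zero, zero_add]
    rw [hsum _ _ hz0 (by linarith)]
    ring_nf
  have hABHK : P ({ω | ω 0 = true} ∩ {ω | ω 1 = true} ∩ ({ω | ω 2 = true} ∩ {ω | ω 3 = true}))
      = ENNReal.ofReal z := by
    rw [key, if_pos (by decide), if_neg (by decide), if_neg (by decide), if_neg (by decide)]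
    simp only [mul_one, mul_zero, add_zero]
  have hHc : P ({ω | ω 1 = true}ᶜ ∩ ({ω | ω 2 = true} ∩ {ω | ω 3 = true})) = 0 := by
    rw [key, if_neg (by decide), if_neg (by decide), if_neg (by decide), if_neg (by decide)]
    simp
  have hKc : P ({ω | ω 0 = true} ∩ {ω | ω 1 = true} ∩ {ω | ω 3 = true}ᶜ) = 0 := by
    rw [key, if_neg (by decide), if_neg (by decide), if_neg (by decide), if_neg (by decide)]
    simp
  have hcx : condProb P {ω | ω 0 = true} {ω | ω 1 = true} = x := by
    rw [condProb, hAH, hH, ENNReal.toReal_one, ENNReal.toReal_ofReal hx, div_one]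
  have hcy : condProb P {ω | ω 2 = true} {ω | ω 3 = true} = y := by
    rw [condProb, hBK, hK, ENNReal.toReal_one, ENNReal.toReal_ofReal hy, div_one]
  refine ⟨P, ⟨hUniv⟩, by rw [hH]; exact one_pos, by rw [hK]; exact one_pos, hcx, hcy, ?_⟩
  rw [conjPrev, hcx, hcy, hABHK, hHc, hKc, hHK, ENNReal.toReal_one, ENNReal.toReal_zero,
    ENNReal.toReal_ofReal hz0]
  simp
end
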